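/- Let f(U) = (1/2)‖UUᵀ - M*‖_F² with M* = V*V*ᵀ of rank r. For any U with dist_F(U, X*) ≤ (1/3)(σ_r*)^{1/2}, one has ‖∇f(U)‖_F² ≤ 10σ₁*·⟨∇f(U), U - P_{X*}(U)⟩, where σ₁* = σ₁(M*). -/

import Mathlib

open Matrix

/-- The Frobenius norm of a real matrix. -/
noncomputable def frob {m n : ℕ} (A : Matrix (Fin m) (Fin n) ℝ) : ℝ :=
  Real.sqrt (∑ i, ∑ j, (A i j) ^ 2)

/-- The trace inner product `⟨A, B⟩ = tr(AᵀB)`. -/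
def mip {m n : ℕ} (A B : Matrix (Fin m) (Fin n) ℝ) : ℝ :=
  (Aᵀ * B).trace

/-- The gradient of `f(U) = (1/2)‖UUᵀ - M‖_F²`. -/
noncomputable def gradf {d r : ℕ} (M : Matrix (Fin d) (Fin d) ℝ)
    (U : Matrix (Fin d) (Fin r) ℝ) : Matrix (Fin d) (Fin r) ℝ :=
  (2 : ℝ) • ((U * Uᵀ - M) * U)


section basic
variable {m n p : ℕ}

lemma mip_eq_sum (A B : Matrix (Fin m) (Fin n) ℝ) :
    mip A B = ∑ i, ∑ j, A i j * B i j := by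
  simp [mip, Matrix.trace, Matrix.diag, Matrix.mul_apply, Matrix.transpose_apply]
  rw [Finset.sum_comm]

lemma mip_self_eq (A : Matrix (Fin m) (Fin n) ℝ) :
    mip A A = ∑ i, ∑ j, (A i j) ^ 2 := by
  rw [mip_eq_sum]; simp [sq]

lemma mip_self_nonneg (A : Matrix (Fin m) (Fin n) ℝ) : 0 ≤ mip A A := by
  rw [mip_self_eq]; positivity

lemma frob_sq (A : Matrix (Fin m) (Fin n) ℝ) : frob A ^ 2 = mip A A := by
  rw [mip_self_eq, frob, Real.sq_sqrt (by positivity)]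

lemma frob_nonneg (A : Matrix (Fin m) (Fin n) ℝ) : 0 ≤ frob A := Real.sqrt_nonneg _

lemma frob_eq_sqrt_mip (A : Matrix (Fin m) (Fin n) ℝ) : frob A = Real.sqrt (mip A A) := by
  rw [mip_self_eq, frob]

lemma mip_cs (A B : Matrix (Fin m) (Fin n) ℝ) :
    mip A B ^ 2 ≤ mip A A * mip B B := by
  rw [mip_eq_sum A B, mip_self_eq A, mip_self_eq B]
  calc (∑ i, ∑ j, A i j * B i j) ^ 2
      = (∑ q : Fin m × Fin n, A q.1 q.2 * B q.1 q.2) ^ 2 := by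
        rw [← Finset.sum_product']; rfl
    _ ≤ (∑ q : Fin m × Fin n, A q.1 q.2 ^ 2) * (∑ q : Fin m × Fin n, B q.1 q.2 ^ 2) :=
        Finset.sum_mul_sq_le_sq_mul_sq _ _ _
    _ = (∑ i, ∑ j, A i j ^ 2) * (∑ i, ∑ j, B i j ^ 2) := by
        rw [← Finset.sum_product', ← Finset.sum_product']; rfl

lemma mip_submul (A : Matrix (Fin m) (Fin n) ℝ) (B : Matrix (Fin n) (Fin p) ℝ) :
    mip (A * B) (A * B) ≤ mip A A * mip B B := by
  rw [mip_self_eq (A * B), mip_self_eq A, mip_self_eq B]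
  simp only [Matrix.mul_apply]
  calc ∑ i, ∑ j, (∑ k, A i k * B k j) ^ 2
      ≤ ∑ i, ∑ j, (∑ k, A i k ^ 2) * (∑ k, B k j ^ 2) := by
        apply Finset.sum_le_sum; intro i _; apply Finset.sum_le_sum; intro j _
        exact Finset.sum_mul_sq_le_sq_mul_sq _ _ _
    _ = (∑ i, ∑ k, A i k ^ 2) * (∑ j, ∑ k, B k j ^ 2) := by
        rw [Finset.sum_mul_sum]
    _ = (∑ i, ∑ j, A i j ^ 2) * (∑ k, ∑ j, B k j ^ 2) := by
        congr 1
        exact Finset.sum_comm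
end basic

lemma trace_psd_mul_nonneg {n : ℕ} {P Q : Matrix (Fin n) (Fin n) ℝ}
    (hP : P.PosSemidef) (hQ : Q.PosSemidef) : 0 ≤ (P * Q).trace := by
  obtain ⟨C, rfl⟩ : ∃ C : Matrix (Fin n) (Fin n) ℝ, Q = Cᴴ * C := by
    open scoped MatrixOrder Matrix.Norms.L2Operator in
    exact CStarAlgebra.nonneg_iff_eq_star_mul_self.mp hQ.nonneg
  rw [← Matrix.mul_assoc, Matrix.trace_mul_cycle]
  rw [Matrix.trace]
  apply Finset.sum_nonneg
  intro i _
  have h := hP.dotProduct_mulVec_nonneg (fun j => Cᴴ j i)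
  simp only [star_trivial] at h
  convert h using 1
  simp only [Matrix.diag, Matrix.mul_apply, dotProduct, Matrix.mulVec,
    Matrix.conjTranspose_apply, star_trivial]
  have hsym : ∀ a b, P a b = P b a := by
    intro a b
    conv_lhs => rw [← hP.1]
    simp [Matrix.conjTranspose_apply]
  congr 1; ext x
  rw [Finset.sum_mul, Finset.mul_sum]
  congr 1; ext j
  rw [hsym x j]
  ring

lemma shift_psd {n : ℕ} {H : Matrix (Fin n) (Fin n) ℝ} (hH : H.IsHermitian) (c : ℝ)
    (hc : ∀ i, c ≤ hH.eigenvalues i) : (H - c • 1).PosSemidef := by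
  set V : Matrix (Fin n) (Fin n) ℝ := (Matrix.IsHermitian.eigenvectorUnitary hH : Matrix (Fin n) (Fin n) ℝ) with hVdef
  have hV : V * star V = 1 := Matrix.mem_unitaryGroup_iff.mp hH.eigenvectorUnitary.2
  have key : H - c • 1 = V * (Matrix.diagonal (fun i => hH.eigenvalues i - c)) * Vᴴ := by
    have hspec := hH.spectral_theorem
    simp only [Unitary.conjStarAlgAut_apply, Unitary.coe_star] at hspec
    have h1 : Matrix.diagonal (fun i => hH.eigenvalues i - c)
        = Matrix.diagonal (RCLike.ofReal ∘ hH.eigenvalues) - c • (1 : Matrix (Fin n) (Fin n) ℝ) := by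
      rw [← Matrix.diagonal_one, ← Matrix.diagonal_smul, Matrix.diagonal_sub]
      congr 1; ext i
      simp [RCLike.ofReal]
    rw [h1, mul_sub, sub_mul]
    rw [show Vᴴ = star V from rfl, ← hspec]
    congr 1
    rw [Matrix.mul_smul, Matrix.smul_mul, Matrix.mul_one, hV]
  rw [key]
  exact (Matrix.posSemidef_diagonal_iff.mpr (fun i => by simpa using hc i)).mul_mul_conjTranspose_same V

lemma opnorm_quad {d : ℕ} (M : Matrix (Fin d) (Fin d) ℝ) (x : Fin d → ℝ) :
    x ⬝ᵥ (M *ᵥ x) ≤ ‖Matrix.toEuclideanCLM (𝕜 := ℝ) (n := Fin d) M‖ * (x ⬝ᵥ x) := by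
  set T := Matrix.toEuclideanCLM (𝕜 := ℝ) (n := Fin d) M
  set x' : EuclideanSpace ℝ (Fin d) := (WithLp.equiv 2 (Fin d → ℝ)).symm x with hx'
  have h1 : T x' = (WithLp.equiv 2 (Fin d → ℝ)).symm (M *ᵥ x) :=
    Matrix.toEuclideanCLM_toLp M x
  have h2 : x ⬝ᵥ (M *ᵥ x) = inner ℝ x' (T x') := by
    rw [h1]
    simp only [PiLp.inner_apply, dotProduct, RCLike.inner_apply, starRingEnd_apply, star_trivial]
    exact Finset.sum_congr rfl fun i _ => mul_comm _ _
  have h3 : (x ⬝ᵥ x) = ‖x'‖ ^ 2 := by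
    rw [← real_inner_self_eq_norm_sq]
    simp only [PiLp.inner_apply, dotProduct, RCLike.inner_apply, starRingEnd_apply, star_trivial]
    rfl
  rw [h2, h3]
  calc inner ℝ x' (T x') ≤ ‖x'‖ * ‖T x'‖ := real_inner_le_norm _ _
    _ ≤ ‖x'‖ * (‖T‖ * ‖x'‖) := by
        apply mul_le_mul_of_nonneg_left (T.le_opNorm x') (norm_nonneg _)
    _ = ‖T‖ * ‖x'‖ ^ 2 := by ring

lemma sb_transpose {r : ℕ} (a b : Fin r) :
    (Matrix.single a b (1:ℝ))ᵀ = Matrix.single b a 1 := by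
  ext x y
  simp [Matrix.transpose_apply, Matrix.single, and_comm]

lemma sb_mul_ne {r : ℕ} (a b c e : Fin r) (h : b ≠ c) :
    Matrix.single a b (1:ℝ) * Matrix.single c e 1 = 0 :=
  Matrix.single_mul_single_of_ne (1:ℝ) a b c h 1

lemma sb_mul_eq {r : ℕ} (a b e : Fin r) :
    Matrix.single a b (1:ℝ) * Matrix.single b e 1 = Matrix.single a e 1 := by
  rw [Matrix.single_mul_single_same, one_mul]

lemma trace_mul_stdBasis {r : ℕ} (W : Matrix (Fin r) (Fin r) ℝ) (a b : Fin r) :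
    (W * Matrix.single a b (1:ℝ)).trace = W b a := by
  rw [Matrix.trace]
  rw [Finset.sum_eq_single b]
  · simp [Matrix.diag]
  · intro c _ hc
    simp only [Matrix.diag]
    exact Matrix.mul_single_apply_of_ne (c := (1:ℝ)) a b c c hc W
  · simp

lemma opt_rot_symm {r : ℕ} (W : Matrix (Fin r) (Fin r) ℝ)
    (hmax : ∀ Q : Matrix (Fin r) (Fin r) ℝ, Q * Qᵀ = 1 → Qᵀ * Q = 1 →
      (W * Q).trace ≤ W.trace) : Wᵀ = W := by
  have main : ∀ i j : Fin r, i ≠ j → W j i = W i j := by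
    intro i j hij
    set P : Matrix (Fin r) (Fin r) ℝ := Matrix.single i i 1 + Matrix.single j j 1 with hPdef
    set K : Matrix (Fin r) (Fin r) ℝ := Matrix.single i j 1 - Matrix.single j i 1 with hKdef
    have hji : j ≠ i := hij.symm
    have hP2 : P * P = P := by
      rw [hPdef, add_mul, mul_add, mul_add, sb_mul_eq, sb_mul_eq,
        sb_mul_ne i i j j hij, sb_mul_ne j j i i hji]
      abel
    have hPK : P * K = K := by
      rw [hPdef, hKdef, add_mul, mul_sub, mul_sub, sb_mul_eq, sb_mul_eq,
        sb_mul_ne i i j i hij, sb_mul_ne j j i j hji]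
      abel
    have hKP : K * P = K := by
      rw [hPdef, hKdef, sub_mul, mul_add, mul_add, sb_mul_eq, sb_mul_eq,
        sb_mul_ne i j i i hji, sb_mul_ne j i j j hij]
      abel
    have hK2 : K * K = -P := by
      rw [hPdef, hKdef, sub_mul, mul_sub, mul_sub, sb_mul_eq, sb_mul_eq,
        sb_mul_ne i j i j hji, sb_mul_ne j i j i hij]
      abel
    have hPt : Pᵀ = P := by
      rw [hPdef, Matrix.transpose_add, sb_transpose, sb_transpose]
      try abel
    have hKt : Kᵀ = -K := by
      rw [hKdef, Matrix.transpose_sub, sb_transpose, sb_transpose]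
      abel
    set Q : ℝ → ℝ → Matrix (Fin r) (Fin r) ℝ :=
      fun c s => 1 + (c - 1) • P + s • K with hQdef
    have expand : ∀ c s t : ℝ, Q c s * Q c t =
        1 + ((c-1)*2 + (c-1)^2 - s*t) • P + (s + t + (c-1)*s + (c-1)*t) • K := by
      intro c s t
      simp only [hQdef, mul_add, add_mul, one_mul, mul_one, Matrix.smul_mul, Matrix.mul_smul,
        hP2, hPK, hKP, hK2, smul_smul]
      module
    have orth : ∀ c s : ℝ, c^2 + s^2 = 1 → Q c s * (Q c s)ᵀ = 1 ∧ (Q c s)ᵀ * Q c s = 1 := by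
      intro c s hcs
      have ht : (Q c s)ᵀ = Q c (-s) := by
        simp only [hQdef, Matrix.transpose_add, Matrix.transpose_smul, hPt, hKt,
          Matrix.transpose_one]
        module
      constructor
      · rw [ht, expand]
        have h1 : (c-1)*2 + (c-1)^2 - s*(-s) = 0 := by nlinarith
        have h2 : s + -s + (c-1)*s + (c-1)*(-s) = 0 := by ring
        rw [h1, h2]; simp
      · rw [ht, expand]
        have h1 : (c-1)*2 + (c-1)^2 - (-s)*s = 0 := by nlinarith
        have h2 : -s + s + (c-1)*(-s) + (c-1)*s = 0 := by ring
        rw [h1, h2]; simp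
    have htr : ∀ c s : ℝ, (W * Q c s).trace =
        W.trace + (c-1) * (W i i + W j j) + s * (W j i - W i j) := by
      intro c s
      simp only [hQdef, mul_add, Matrix.mul_one, Matrix.trace_add, Matrix.mul_smul,
        Matrix.trace_smul, hPdef, hKdef, mul_sub, Matrix.trace_sub,
        trace_mul_stdBasis, smul_eq_mul]
      try ring
    have key : ∀ s : ℝ, s^2 ≤ 1 →
        s * (W j i - W i j) ≤ (1 - Real.sqrt (1 - s^2)) * (W i i + W j j) := by
      intro s hs
      set c := Real.sqrt (1 - s^2) with hc
      have hcs : c^2 + s^2 = 1 := by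
        rw [hc, Real.sq_sqrt (by linarith)]; ring
      obtain ⟨h1, h2⟩ := orth c s hcs
      have h3 := hmax (Q c s) h1 h2
      rw [htr c s] at h3
      nlinarith [h3]
    have habs : ∀ s : ℝ, 0 < s → s ≤ 1 → |W j i - W i j| ≤ s * |W i i + W j j| := by
      intro s hs0 hs1
      have hs2 : s^2 ≤ 1 := by nlinarith
      have hsqnn : (0:ℝ) ≤ 1 - s^2 := by linarith
      have hbound : 1 - Real.sqrt (1 - s^2) ≤ s^2 := by
        have h := Real.sqrt_le_sqrt (show (1-s^2)^2 ≤ (1-s^2) by nlinarith)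
        rw [Real.sqrt_sq hsqnn] at h
        linarith
      have hnn : (0:ℝ) ≤ 1 - Real.sqrt (1 - s^2) := by
        have := Real.sqrt_le_one.mpr (show (1:ℝ) - s^2 ≤ 1 by nlinarith)
        linarith
      have h1 := key s hs2
      have h2 := key (-s) (by nlinarith)
      rw [show ((-s:ℝ))^2 = s^2 by ring] at h2
      have hRHS : (1 - Real.sqrt (1 - s^2)) * (W i i + W j j) ≤ s^2 * |W i i + W j j| :=
        calc (1 - Real.sqrt (1 - s^2)) * (W i i + W j j)
            ≤ (1 - Real.sqrt (1 - s^2)) * |W i i + W j j| :=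
              mul_le_mul_of_nonneg_left (le_abs_self _) hnn
          _ ≤ s^2 * |W i i + W j j| :=
              mul_le_mul_of_nonneg_right hbound (abs_nonneg _)
      have h3 : s * |W j i - W i j| ≤ s^2 * |W i i + W j j| := by
        rcases abs_cases (W j i - W i j) with ⟨he, _⟩ | ⟨he, _⟩
        · rw [he]; linarith
        · rw [he]; nlinarith [h2, hRHS]
      nlinarith [h3]
    by_contra hne
    have hx : 0 < |W j i - W i j| := by
      rw [abs_pos]
      intro h; exact hne (by linarith [sub_eq_zero.mp h])
    set B := |W i i + W j j| with hB
    have hB0 : 0 ≤ B := abs_nonneg _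
    set s := min 1 (|W j i - W i j| / (2 * (B + 1))) with hs
    have hs0 : 0 < s := by
      apply lt_min one_pos
      positivity
    have hs1 : s ≤ 1 := min_le_left _ _
    have h := habs s hs0 hs1
    have hsle : s ≤ |W j i - W i j| / (2 * (B + 1)) := min_le_right _ _
    have h5 : s * B ≤ |W j i - W i j| / (2 * (B + 1)) * B :=
      mul_le_mul_of_nonneg_right hsle hB0
    have hlt : |W j i - W i j| / (2 * (B + 1)) * B < |W j i - W i j| := by
      rw [div_mul_eq_mul_div, div_lt_iff₀ (by positivity)]
      nlinarith
    linarith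
  ext a b
  rw [Matrix.transpose_apply]
  rcases eq_or_ne a b with rfl | hab
  · rfl
  · exact (main b a (Ne.symm hab)).symm

-- more small lemmas
section more
variable {m n p : ℕ}

lemma mip_comm (A B : Matrix (Fin m) (Fin n) ℝ) : mip A B = mip B A := by
  unfold mip
  rw [← Matrix.trace_transpose, Matrix.transpose_mul, Matrix.transpose_transpose]

lemma mip_add_left (A B C : Matrix (Fin m) (Fin n) ℝ) :
    mip (A + B) C = mip A C + mip B C := by
  unfold mip
  rw [Matrix.transpose_add, Matrix.add_mul, Matrix.trace_add]

lemma mip_add_right (A B C : Matrix (Fin m) (Fin n) ℝ) :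
    mip A (B + C) = mip A B + mip A C := by
  unfold mip
  rw [Matrix.mul_add, Matrix.trace_add]

lemma mip_smul_left (c : ℝ) (A B : Matrix (Fin m) (Fin n) ℝ) :
    mip (c • A) B = c * mip A B := by
  unfold mip
  rw [Matrix.transpose_smul, Matrix.smul_mul, Matrix.trace_smul, smul_eq_mul]

lemma mip_smul_right (c : ℝ) (A B : Matrix (Fin m) (Fin n) ℝ) :
    mip A (c • B) = c * mip A B := by
  unfold mip
  rw [Matrix.mul_smul, Matrix.trace_smul, smul_eq_mul]

lemma mip_transpose_self (A : Matrix (Fin m) (Fin n) ℝ) : mip Aᵀ Aᵀ = mip A A := by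
  unfold mip
  rw [Matrix.transpose_transpose, Matrix.trace_mul_comm]

lemma dot_sq_le {k : ℕ} (u w : Fin k → ℝ) : (u ⬝ᵥ w)^2 ≤ (u ⬝ᵥ u) * (w ⬝ᵥ w) := by
  simp only [dotProduct]
  have h := Finset.sum_mul_sq_le_sq_mul_sq Finset.univ u w
  calc (∑ i, u i * w i) ^ 2 ≤ (∑ i, u i ^ 2) * (∑ i, w i ^ 2) := h
    _ = (∑ i, u i * u i) * (∑ i, w i * w i) := by simp [sq]

lemma dot_self_nonneg {k : ℕ} (u : Fin k → ℝ) : 0 ≤ u ⬝ᵥ u :=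
  Finset.sum_nonneg fun i _ => mul_self_nonneg (u i)

lemma mulVec_transpose_dot_le {d r : ℕ} (D : Matrix (Fin d) (Fin r) ℝ) (x : Fin d → ℝ) :
    (Dᵀ *ᵥ x) ⬝ᵥ (Dᵀ *ᵥ x) ≤ mip D D * (x ⬝ᵥ x) := by
  simp only [dotProduct, Matrix.mulVec, mip_self_eq, Matrix.transpose_apply]
  calc ∑ j, (∑ i, D i j * x i) * (∑ i, D i j * x i)
      ≤ ∑ j, (∑ i, (D i j)^2) * (∑ i, (x i)^2) := by
        apply Finset.sum_le_sum; intro j _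
        rw [← sq]
        exact Finset.sum_mul_sq_le_sq_mul_sq _ _ _
    _ = (∑ j, ∑ i, (D i j)^2) * (∑ i, (x i)^2) := by rw [← Finset.sum_mul]
    _ = (∑ i, ∑ j, (D i j)^2) * (∑ i, x i * x i) := by
        rw [Finset.sum_comm]
        simp [sq]
end more

set_option maxHeartbeats 4000000 in
/-- For `f(U) = (1/2)‖UUᵀ - M*‖_F²` with `M* = V*V*ᵀ` of rank `r`: for any `U`
within Frobenius distance `(1/3)(σ_r*)^{1/2}` of `X*`, one has
`‖∇f(U)‖_F² ≤ 10σ₁*·⟨∇f(U), U - P_{X*}(U)⟩`, where `σ₁* = σ₁(M*)` is the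
largest singular value (the spectral norm) of `M* = V*V*ᵀ`. -/
theorem matrix_factorization_local_regularity_upper {d r : ℕ} (hr : 0 < r)
    (Vs : Matrix (Fin d) (Fin r) ℝ) (hrank : Vs.rank = r)
    (σr σ1 : ℝ)
    (hherm : (Vsᵀ * Vs).IsHermitian)
    (hσr : σr = haveI : Nonempty (Fin r) := Fin.pos_iff_nonempty.mp hr
      ⨅ i, hherm.eigenvalues i)
    (hσ1 : σ1 = ‖Matrix.toEuclideanCLM (𝕜 := ℝ) (n := Fin d) (Vs * Vsᵀ)‖)
    (U Us : Matrix (Fin d) (Fin r) ℝ)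
    (hUs : ∃ R : Matrix (Fin r) (Fin r) ℝ,
      R * Rᵀ = 1 ∧ Rᵀ * R = 1 ∧ Us = Vs * R)
    (hproj : ∀ R : Matrix (Fin r) (Fin r) ℝ, R * Rᵀ = 1 → Rᵀ * R = 1 →
      frob (U - Us) ≤ frob (U - Vs * R))
    (hclose : frob (U - Us) ≤ 1 / 3 * Real.sqrt σr) :
    frob (gradf (Vs * Vsᵀ) U) ^ 2 ≤
      10 * σ1 * mip (gradf (Vs * Vsᵀ) U) (U - Us) := by
  haveI : Nonempty (Fin r) := Fin.pos_iff_nonempty.mp hr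
  obtain ⟨R0, hR1, hR2, hUsVs⟩ := hUs
  obtain ⟨M, hMdef⟩ : ∃ X : Matrix (Fin d) (Fin d) ℝ, X = Vs * Vsᵀ := ⟨_, rfl⟩
  rw [← hMdef] at hσ1 ⊢
  obtain ⟨Δ, hΔdef⟩ : ∃ X : Matrix (Fin d) (Fin r) ℝ, X = U - Us := ⟨_, rfl⟩
  rw [← hΔdef] at hclose ⊢
  obtain ⟨G, hGeq⟩ : ∃ X : Matrix (Fin d) (Fin r) ℝ, X = gradf M U := ⟨_, rfl⟩
  rw [← hGeq]
  obtain ⟨E, hEdef⟩ : ∃ X : Matrix (Fin d) (Fin d) ℝ, X = U * Uᵀ - M := ⟨_, rfl⟩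
  obtain ⟨S, hSdef⟩ : ∃ X : Matrix (Fin r) (Fin r) ℝ, X = Usᵀ * Δ := ⟨_, rfl⟩
  have hUeq : U = Us + Δ := by rw [hΔdef]; abel
  have hMt : Mᵀ = M := by rw [hMdef, Matrix.transpose_mul, Matrix.transpose_transpose]
  have hUsUst : Us * Usᵀ = M := by
    rw [hUsVs, Matrix.transpose_mul, hMdef]
    calc Vs * R0 * (R0ᵀ * Vsᵀ) = Vs * (R0 * R0ᵀ) * Vsᵀ := by
          simp only [Matrix.mul_assoc]
      _ = Vs * Vsᵀ := by rw [hR1, Matrix.mul_one]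
  have hEt : Eᵀ = E := by
    rw [hEdef, Matrix.transpose_sub, Matrix.transpose_mul, Matrix.transpose_transpose, hMt]
  obtain ⟨A, hAdef⟩ : ∃ X : Matrix (Fin d) (Fin d) ℝ, X = Δ * Usᵀ + Us * Δᵀ := ⟨_, rfl⟩
  obtain ⟨Bm, hBdef⟩ : ∃ X : Matrix (Fin d) (Fin d) ℝ, X = Δ * Δᵀ := ⟨_, rfl⟩
  have hAt : Aᵀ = A := by
    rw [hAdef, Matrix.transpose_add, Matrix.transpose_mul, Matrix.transpose_mul,
      Matrix.transpose_transpose, Matrix.transpose_transpose]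
    abel
  have hEdec : E = A + Bm := by
    rw [hEdef, hAdef, hBdef, hUeq]
    rw [Matrix.transpose_add, Matrix.mul_add, Matrix.add_mul, Matrix.add_mul, hUsUst]
    abel
  have hcross : Δ * Uᵀ + U * Δᵀ = E + Bm := by
    rw [hEdec, hAdef, hBdef]
    rw [hUeq, Matrix.transpose_add, Matrix.mul_add, Matrix.add_mul]
    abel
  -- gradient
  have hGdef : G = (2:ℝ) • (E * U) := by rw [hGeq, gradf, hEdef]
  -- nonneg facts
  have hσ1nn : 0 ≤ σ1 := by rw [hσ1]; exact norm_nonneg _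
  have hVVpsd : (Vsᵀ * Vs).PosSemidef := by
    have h := Matrix.posSemidef_conjTranspose_mul_self Vs
    rwa [Matrix.conjTranspose_eq_transpose_of_trivial] at h
  have hσrnn : 0 ≤ σr := by
    rw [hσr]
    exact le_ciInf fun i => hVVpsd.eigenvalues_nonneg i
  have hσr_le : ∀ i, σr ≤ hherm.eigenvalues i := by
    intro i
    rw [hσr]
    exact ciInf_le (Set.Finite.bddBelow (Set.finite_range _)) i
  have hshift : (Vsᵀ * Vs - σr • 1).PosSemidef := shift_psd hherm σr hσr_le
  -- σr ≤ σ1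
  have hσrσ1 : σr ≤ σ1 := by
    set v : Fin r → ℝ := Pi.single ⟨0, hr⟩ 1 with hv
    have hvv : v ⬝ᵥ v = 1 := by simp [hv, dotProduct, Pi.single_apply]
    set t : ℝ := v ⬝ᵥ ((Vsᵀ * Vs) *ᵥ v) with htdef
    have h0 := hshift.dotProduct_mulVec_nonneg v
    simp only [star_trivial] at h0
    rw [Matrix.sub_mulVec, dotProduct_sub, Matrix.smul_mulVec,
      Matrix.one_mulVec, dotProduct_smul] at h0
    have hσrt : σr ≤ t := by
      rw [smul_eq_mul, hvv] at h0
      rw [htdef]; linarith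
    set w : Fin d → ℝ := Vs *ᵥ v with hw
    set z : Fin r → ℝ := Vsᵀ *ᵥ w with hz
    have htw : t = w ⬝ᵥ w := by
      rw [htdef, hw, ← Matrix.mulVec_mulVec, Matrix.dotProduct_mulVec,
        ← Matrix.mulVec_transpose]
      rfl
    have htz : t = v ⬝ᵥ z := by
      rw [htdef, hz, hw, ← Matrix.mulVec_mulVec]
    have hcs : t^2 ≤ z ⬝ᵥ z := by
      have := dot_sq_le v z
      rw [← htz, hvv] at this
      linarith
    have hop : w ⬝ᵥ (M *ᵥ w) ≤ σ1 * (w ⬝ᵥ w) := by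
      rw [hσ1]
      exact opnorm_quad M w
    have hMwz : w ⬝ᵥ (M *ᵥ w) = z ⬝ᵥ z := by
      rw [hMdef, hz, ← Matrix.mulVec_mulVec, Matrix.dotProduct_mulVec, ← Matrix.mulVec_transpose]
    rw [hMwz, ← htw] at hop
    nlinarith [hσrt, hcs, hop, hσrnn, hσ1nn]
  -- qΔ bound
  have haΔ : mip Δ Δ ≤ σr / 9 := by
    have h2 : frob Δ ^ 2 ≤ (1 / 3 * Real.sqrt σr)^2 :=
      pow_le_pow_left₀ (frob_nonneg _) hclose 2
    rw [frob_sq] at h2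
    calc mip Δ Δ ≤ (1/3 * Real.sqrt σr)^2 := h2
      _ = 1/9 * (Real.sqrt σr)^2 := by ring
      _ = σr / 9 := by rw [Real.sq_sqrt hσrnn]; ring
  have haΔnn : 0 ≤ mip Δ Δ := mip_self_nonneg Δ
  -- W symmetric
  have hWsym : (Usᵀ * U)ᵀ = Usᵀ * U := by
    apply opt_rot_symm
    intro Q0 hQ01 hQ02
    set Q : Matrix (Fin r) (Fin r) ℝ := Q0ᵀ with hQdef
    have hQ1 : Q * Qᵀ = 1 := by rw [hQdef, Matrix.transpose_transpose]; exact hQ02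
    have hQ2 : Qᵀ * Q = 1 := by rw [hQdef, Matrix.transpose_transpose]; exact hQ01
    have hRQ1 : (R0 * Q) * (R0 * Q)ᵀ = 1 := by
      rw [Matrix.transpose_mul]
      calc R0 * Q * (Qᵀ * R0ᵀ) = R0 * (Q * Qᵀ) * R0ᵀ := by simp only [Matrix.mul_assoc]
        _ = 1 := by rw [hQ1, Matrix.mul_one, hR1]
    have hRQ2 : (R0 * Q)ᵀ * (R0 * Q) = 1 := by
      rw [Matrix.transpose_mul]
      calc Qᵀ * R0ᵀ * (R0 * Q) = Qᵀ * (R0ᵀ * R0) * Q := by simp only [Matrix.mul_assoc]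
        _ = 1 := by rw [hR2, Matrix.mul_one, hQ2]
    have hp := hproj (R0 * Q) hRQ1 hRQ2
    have hVsRQ : Vs * (R0 * Q) = Us * Q := by rw [hUsVs, Matrix.mul_assoc]
    rw [hVsRQ] at hp
    -- square the inequality
    have hp2 : mip (U - Us) (U - Us) ≤ mip (U - Us * Q) (U - Us * Q) := by
      have := pow_le_pow_left₀ (frob_nonneg (U - Us)) hp 2
      rwa [frob_sq, frob_sq] at this
    -- expand both sides
    have hexp : ∀ X : Matrix (Fin d) (Fin r) ℝ,
        mip (U - X) (U - X) = mip U U - 2 * (Xᵀ * U).trace + mip X X := by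
      intro X
      unfold mip
      rw [Matrix.transpose_sub, Matrix.sub_mul, Matrix.mul_sub, Matrix.mul_sub,
        Matrix.trace_sub, Matrix.trace_sub, Matrix.trace_sub]
      have : (Uᵀ * X).trace = (Xᵀ * U).trace := by
        rw [← Matrix.trace_transpose, Matrix.transpose_mul, Matrix.transpose_transpose]
      rw [this]
      ring
    rw [hexp Us, hexp (Us * Q)] at hp2
    have hQtr : ((Us * Q)ᵀ * (Us * Q)).trace = (Usᵀ * Us).trace := by
      rw [Matrix.transpose_mul]
      calc (Qᵀ * Usᵀ * (Us * Q)).trace = (Qᵀ * (Usᵀ * (Us * Q))).trace := by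
            rw [Matrix.mul_assoc]
        _ = ((Usᵀ * (Us * Q)) * Qᵀ).trace := Matrix.trace_mul_comm _ _
        _ = (Usᵀ * Us * (Q * Qᵀ)).trace := by simp only [Matrix.mul_assoc]
        _ = (Usᵀ * Us).trace := by rw [hQ1, Matrix.mul_one]
    have hWQ : ((Us * Q)ᵀ * U).trace = ((Usᵀ * U) * Q0).trace := by
      rw [Matrix.transpose_mul]
      calc (Qᵀ * Usᵀ * U).trace = (Qᵀ * (Usᵀ * U)).trace := by rw [Matrix.mul_assoc]
        _ = ((Usᵀ * U) * Qᵀ).trace := Matrix.trace_mul_comm _ _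
        _ = ((Usᵀ * U) * Q0).trace := by rw [hQdef, Matrix.transpose_transpose]
    have hmipUsQ : mip (Us * Q) (Us * Q) = mip Us Us := hQtr
    rw [hWQ, hmipUsQ] at hp2
    linarith
  have hSt : Sᵀ = S := by
    rw [hSdef, hΔdef, Matrix.mul_sub, Matrix.transpose_sub, hWsym]
    congr 1
    rw [Matrix.transpose_mul, Matrix.transpose_transpose]
  -- PSD facts
  have hUsShift : (Usᵀ * Us - σr • 1).PosSemidef := by
    have h := hshift.conjTranspose_mul_mul_same R0
    have heq : R0ᴴ * (Vsᵀ * Vs - σr • 1) * R0 = Usᵀ * Us - σr • 1 := by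
      rw [Matrix.conjTranspose_eq_transpose_of_trivial]
      rw [Matrix.mul_sub, Matrix.sub_mul]
      congr 1
      · rw [hUsVs, Matrix.transpose_mul]
        simp only [Matrix.mul_assoc]
      · rw [Matrix.mul_smul, Matrix.smul_mul, Matrix.mul_one, hR2]
    rwa [heq] at h
  have hΔΔpsd : (Δᵀ * Δ).PosSemidef := by
    have h := Matrix.posSemidef_conjTranspose_mul_self Δ
    rwa [Matrix.conjTranspose_eq_transpose_of_trivial] at h
  have ht1 : σr * mip Δ Δ ≤ ((Usᵀ * Us) * (Δᵀ * Δ)).trace := by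
    have h := trace_psd_mul_nonneg hUsShift hΔΔpsd
    rw [Matrix.sub_mul, Matrix.trace_sub, Matrix.smul_mul, Matrix.one_mul,
      Matrix.trace_smul, smul_eq_mul] at h
    have : (Δᵀ * Δ).trace = mip Δ Δ := rfl
    rw [this] at h
    linarith
  -- trace identities
  have tS : (S * S).trace = mip S S := by
    unfold mip
    rw [hSt]
  have hT1 : (Δ * Usᵀ * (Δ * Usᵀ)).trace = mip S S := by
    rw [show Δ * Usᵀ * (Δ * Usᵀ) = Δ * (Usᵀ * Δ * Usᵀ) by simp only [Matrix.mul_assoc]]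
    rw [Matrix.trace_mul_comm]
    rw [show Usᵀ * Δ * Usᵀ * Δ = S * S by rw [hSdef]; simp only [Matrix.mul_assoc]]
    exact tS
  have hT2 : (Δ * Usᵀ * (Us * Δᵀ)).trace = ((Usᵀ * Us) * (Δᵀ * Δ)).trace := by
    rw [show Δ * Usᵀ * (Us * Δᵀ) = Δ * (Usᵀ * Us * Δᵀ) by simp only [Matrix.mul_assoc]]
    rw [Matrix.trace_mul_comm]
    rw [show Usᵀ * Us * Δᵀ * Δ = Usᵀ * Us * (Δᵀ * Δ) by simp only [Matrix.mul_assoc]]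
  have hT3 : (Us * Δᵀ * (Δ * Usᵀ)).trace = ((Usᵀ * Us) * (Δᵀ * Δ)).trace := by
    rw [show Us * Δᵀ * (Δ * Usᵀ) = Us * (Δᵀ * Δ * Usᵀ) by simp only [Matrix.mul_assoc]]
    rw [Matrix.trace_mul_comm]
    rw [show Δᵀ * Δ * Usᵀ * Us = Δᵀ * Δ * (Usᵀ * Us) by simp only [Matrix.mul_assoc]]
    exact Matrix.trace_mul_comm _ _
  have hT4 : (Us * Δᵀ * (Us * Δᵀ)).trace = mip S S := by
    rw [show Us * Δᵀ * (Us * Δᵀ) = Us * (Δᵀ * Us * Δᵀ) by simp only [Matrix.mul_assoc]]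
    rw [Matrix.trace_mul_comm]
    rw [show Δᵀ * Us * Δᵀ * Us = Sᵀ * Sᵀ by
      rw [hSdef, Matrix.transpose_mul, Matrix.transpose_transpose]
      simp only [Matrix.mul_assoc]]
    rw [hSt, tS]
  have hqAA : mip A A = 2 * ((Usᵀ * Us) * (Δᵀ * Δ)).trace + 2 * mip S S := by
    have : mip A A = (A * A).trace := by unfold mip; rw [hAt]
    rw [this, hAdef]
    rw [Matrix.add_mul, Matrix.mul_add, Matrix.mul_add, Matrix.trace_add, Matrix.trace_add,
      Matrix.trace_add, hT1, hT2, hT3, hT4]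
    ring
  have hT5 : (Δ * Usᵀ * (Δ * Δᵀ)).trace = (S * (Δᵀ * Δ)).trace := by
    rw [show Δ * Usᵀ * (Δ * Δᵀ) = Δ * (Usᵀ * Δ * Δᵀ) by simp only [Matrix.mul_assoc]]
    rw [Matrix.trace_mul_comm]
    rw [show Usᵀ * Δ * Δᵀ * Δ = S * (Δᵀ * Δ) by rw [hSdef]; simp only [Matrix.mul_assoc]]
  have hT6 : (Us * Δᵀ * (Δ * Δᵀ)).trace = (S * (Δᵀ * Δ)).trace := by
    rw [show Us * Δᵀ * (Δ * Δᵀ) = Us * (Δᵀ * Δ * Δᵀ) by simp only [Matrix.mul_assoc]]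
    rw [Matrix.trace_mul_comm]
    rw [show Δᵀ * Δ * Δᵀ * Us = Δᵀ * Δ * Sᵀ by
      rw [hSdef, Matrix.transpose_mul, Matrix.transpose_transpose, Matrix.mul_assoc]]
    rw [hSt, Matrix.trace_mul_comm]
  have hqAB : mip A Bm = 2 * (S * (Δᵀ * Δ)).trace := by
    have : mip A Bm = (A * Bm).trace := by unfold mip; rw [hAt]
    rw [this, hAdef, hBdef, Matrix.add_mul, Matrix.trace_add, hT5, hT6]
    ring
  have hSB : (S * (Δᵀ * Δ)).trace = mip S (Δᵀ * Δ) := by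
    unfold mip
    rw [hSt]
  have hSB2 : (mip S (Δᵀ * Δ))^2 ≤ mip S S * (mip Δ Δ)^2 := by
    have h1 := mip_cs S (Δᵀ * Δ)
    have h2 : mip (Δᵀ * Δ) (Δᵀ * Δ) ≤ mip Δ Δ * mip Δ Δ := by
      have := mip_submul Δᵀ Δ
      rwa [mip_transpose_self] at this
    have h3 := mip_self_nonneg S
    nlinarith [h1, h2, h3, mip_self_nonneg (Δᵀ * Δ)]
  have hEexp : mip E E = mip A A + 2 * mip A Bm + mip Bm Bm := by
    rw [hEdec]
    simp only [mip_add_left, mip_add_right]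
    rw [mip_comm Bm A]
    ring
  have hBb : mip Bm Bm ≤ (mip Δ Δ)^2 := by
    rw [hBdef]
    have := mip_submul Δ Δᵀ
    rw [mip_transpose_self] at this
    nlinarith [this]
  -- lower bound on mip E E
  have hElow : 16/9 * (σr * mip Δ Δ) ≤ mip E E := by
    set x := Real.sqrt (mip S S) with hx
    have hx2 : x^2 = mip S S := Real.sq_sqrt (mip_self_nonneg S)
    have hxnn : 0 ≤ x := Real.sqrt_nonneg _
    have hcAB : -(2 * (x * mip Δ Δ)) ≤ mip A Bm := by
      rw [hqAB, hSB]
      have h := hSB2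
      have hxa : 0 ≤ x * mip Δ Δ := mul_nonneg hxnn haΔnn
      have habs : -(x * mip Δ Δ) ≤ mip S (Δᵀ * Δ) := by
        nlinarith [h, hx2, hxa, sq_nonneg (mip S (Δᵀ * Δ) - x * mip Δ Δ),
          sq_nonneg (mip S (Δᵀ * Δ) + x * mip Δ Δ)]
      linarith [habs]
    have hBmnn : 0 ≤ mip Bm Bm := mip_self_nonneg Bm
    rw [hEexp, hqAA]
    nlinarith [ht1, hcAB, hx2, hxnn, haΔ, haΔnn, hσrnn, sq_nonneg (x - mip Δ Δ)]
  have hEnn : 0 ≤ mip E E := mip_self_nonneg E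
  -- B small
  have hB16 : mip Bm Bm ≤ mip E E / 16 := by
    nlinarith [hBb, haΔ, hElow, haΔnn, hσrnn]
  -- inner product with gradient
  have hGdot : mip G Δ = mip E E + mip E Bm := by
    rw [hGdef, mip_smul_left]
    have h1 : mip (E * U) Δ = (E * (Δ * Uᵀ)).trace := by
      unfold mip
      rw [Matrix.transpose_mul, hEt]
      rw [show Uᵀ * E * Δ = Uᵀ * (E * Δ) by rw [Matrix.mul_assoc]]
      rw [Matrix.trace_mul_comm]
      rw [show E * Δ * Uᵀ = E * (Δ * Uᵀ) by rw [Matrix.mul_assoc]]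
    have h2 : (E * (Δ * Uᵀ)).trace = (E * (U * Δᵀ)).trace := by
      rw [← Matrix.trace_transpose, Matrix.transpose_mul, Matrix.transpose_mul,
        Matrix.transpose_transpose, hEt, Matrix.trace_mul_comm]
    have h3 : (E * (Δ * Uᵀ)).trace + (E * (U * Δᵀ)).trace = (E * E).trace + (E * Bm).trace := by
      rw [← Matrix.trace_add, ← Matrix.mul_add, hcross, Matrix.mul_add, Matrix.trace_add]
    have h4 : (E * E).trace = mip E E := by unfold mip; rw [hEt]
    have h5 : (E * Bm).trace = mip E Bm := by unfold mip; rw [hEt]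
    rw [h1]
    linarith [h2, h3, h4, h5]
  have hEB : (mip E Bm)^2 ≤ mip E E * mip Bm Bm := mip_cs E Bm
  have hGdot_low : 3/4 * mip E E ≤ mip G Δ := by
    rw [hGdot]
    have : -(mip E E / 4) ≤ mip E Bm := by
      nlinarith [hEB, hB16, hEnn, mip_self_nonneg Bm, sq_nonneg (mip E Bm + mip E E / 4)]
    linarith
  -- upper bound on gradient norm
  have hCpsd : (((16:ℝ)/9 * σ1) • (1 : Matrix (Fin d) (Fin d) ℝ) - U * Uᵀ).PosSemidef := by
    rw [Matrix.posSemidef_iff_dotProduct_mulVec]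
    constructor
    · unfold Matrix.IsHermitian
      rw [Matrix.conjTranspose_eq_transpose_of_trivial, Matrix.transpose_sub,
        Matrix.transpose_smul, Matrix.transpose_one, Matrix.transpose_mul,
        Matrix.transpose_transpose]
    · intro x
      simp only [star_trivial]
      rw [Matrix.sub_mulVec, dotProduct_sub, Matrix.smul_mulVec,
        Matrix.one_mulVec, dotProduct_smul, smul_eq_mul]
      have hXnn : 0 ≤ x ⬝ᵥ x := dot_self_nonneg x
      have hUUx : x ⬝ᵥ ((U * Uᵀ) *ᵥ x) = (Uᵀ *ᵥ x) ⬝ᵥ (Uᵀ *ᵥ x) := by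
        rw [← Matrix.mulVec_mulVec, Matrix.dotProduct_mulVec, ← Matrix.mulVec_transpose]
      set u : Fin r → ℝ := Usᵀ *ᵥ x with hu
      set w : Fin r → ℝ := Δᵀ *ᵥ x with hwv
      clear_value u w
      have hyuw : Uᵀ *ᵥ x = u + w := by
        rw [hu, hwv, ← Matrix.add_mulVec, ← Matrix.transpose_add, ← hUeq]
      have huu : u ⬝ᵥ u ≤ σ1 * (x ⬝ᵥ x) := by
        have h1 : u ⬝ᵥ u = x ⬝ᵥ (M *ᵥ x) := by
          rw [hu, ← hUsUst, ← Matrix.mulVec_mulVec, Matrix.dotProduct_mulVec,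
            ← Matrix.mulVec_transpose]
          rw [Matrix.transpose_transpose]
          exact dotProduct_comm _ _
        rw [h1, hσ1]
        exact opnorm_quad M x
      have hww : w ⬝ᵥ w ≤ σ1 / 9 * (x ⬝ᵥ x) := by
        have h1 := mulVec_transpose_dot_le Δ x
        have h2 : mip Δ Δ * (x ⬝ᵥ x) ≤ σ1 / 9 * (x ⬝ᵥ x) := by
          apply mul_le_mul_of_nonneg_right _ hXnn
          linarith [haΔ, hσrσ1]
        rw [hwv]
        linarith [h1, h2]
      have hcr := dot_sq_le u w
      have huunn := dot_self_nonneg u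
      have hwwnn := dot_self_nonneg w
      have huw : u ⬝ᵥ w ≤ σ1 / 3 * (x ⬝ᵥ x) := by
        nlinarith [hcr, huu, hww, huunn, hwwnn, hXnn, hσ1nn,
          sq_nonneg (u ⬝ᵥ w - σ1 / 3 * (x ⬝ᵥ x)), sq_nonneg (u ⬝ᵥ w + σ1 / 3 * (x ⬝ᵥ x))]
      rw [hUUx, hyuw]
      rw [add_dotProduct, dotProduct_add, dotProduct_add]
      have hwu : w ⬝ᵥ u = u ⬝ᵥ w := dotProduct_comm w u
      nlinarith [huu, hww, huw, hwu, hXnn, hσ1nn]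
  have hEEpsd : (Eᵀ * E).PosSemidef := by
    have h := Matrix.posSemidef_conjTranspose_mul_self E
    rwa [Matrix.conjTranspose_eq_transpose_of_trivial] at h
  have hGG : mip G G = 4 * ((U * Uᵀ) * (Eᵀ * E)).trace := by
    rw [hGdef, mip_smul_left, mip_smul_right]
    have h1 : mip (E * U) (E * U) = ((Eᵀ * E) * (U * Uᵀ)).trace := by
      unfold mip
      rw [Matrix.transpose_mul]
      rw [show Uᵀ * Eᵀ * (E * U) = Uᵀ * (Eᵀ * (E * U)) by rw [Matrix.mul_assoc]]
      rw [Matrix.trace_mul_comm]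
      rw [show Eᵀ * (E * U) * Uᵀ = Eᵀ * E * (U * Uᵀ) by simp only [Matrix.mul_assoc]]
    rw [h1, Matrix.trace_mul_comm]
    ring
  have hGup : mip G G ≤ 64/9 * σ1 * mip E E := by
    rw [hGG]
    have h := trace_psd_mul_nonneg hCpsd hEEpsd
    rw [Matrix.sub_mul, Matrix.trace_sub, Matrix.smul_mul, Matrix.one_mul,
      Matrix.trace_smul, smul_eq_mul] at h
    have hEE : (Eᵀ * E).trace = mip E E := rfl
    rw [hEE] at h
    linarith
  -- conclusion
  rw [frob_sq]
  have hfinal : 10 * σ1 * (3/4 * mip E E) ≤ 10 * σ1 * mip G Δ := by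
    apply mul_le_mul_of_nonneg_left hGdot_low
    positivity
  calc mip G G ≤ 64/9 * σ1 * mip E E := hGup
    _ ≤ 10 * σ1 * (3/4 * mip E E) := by nlinarith [hEnn, hσ1nn]
    _ ≤ 10 * σ1 * mip G Δ := hfinal
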